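/- Let n ≥ 1 and let β_0, β_1, …, β_n be positive real numbers. Then ∫_Δ (1 − y_1 − ⋯ − y_n)^{β_0 − 1} y_1^{β_1 − 1} ⋯ y_n^{β_n − 1} dy_1 ⋯ dy_n = Γ(β_0)Γ(β_1)⋯Γ(β_n) / Γ(β_0 + β_1 + ⋯ + β_n), where Δ = {y ∈ ℝ^n : y_i ≥ 0 for all i, y_1 + ⋯ + y_n ≤ 1} is the standard n-simplex and Γ is the Gamma function. -/

import Mathlib

open MeasureTheory
open Set
open scoped ENNReal

namespace DirichletAux

lemma measurable_rpow_const (c : ℝ) : Measurable fun x : ℝ => x ^ c := by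
  refine measurable_of_continuousOn_compl_singleton 0 ?_
  intro x hx
  exact (Real.continuousAt_rpow_const x c (Or.inl hx)).continuousWithinAt

lemma prod_rpow_const {x : ℝ} (hx : 0 < x) : ∀ {n : ℕ} (f : Fin n → ℝ),
    ∏ i, x ^ f i = x ^ (∑ i, f i) := by
  intro n
  induction n with
  | zero => intro f; simp
  | succ m ih =>
    intro f
    rw [Fin.prod_univ_succ, Fin.sum_univ_succ, ih (fun i => f i.succ), ← Real.rpow_add hx]

lemma betaIntegrand_integrableOn {a b : ℝ} (ha : 0 < a) (hb : 0 < b) :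
    IntegrableOn (fun x : ℝ => x ^ (a - 1) * (1 - x) ^ (b - 1)) (Ioc 0 1) volume := by
  have h := Complex.betaIntegral_convergent (u := a) (v := b) (by simpa using ha)
    (by simpa using hb)
  rw [intervalIntegrable_iff, uIoc_of_le zero_le_one] at h
  have h2 := h.re
  refine h2.congr ((ae_restrict_iff' measurableSet_Ioc).2 (ae_of_all _ fun x hx => ?_))
  have hx0 : (0:ℝ) ≤ x := hx.1.le
  have hx1 : (0:ℝ) ≤ 1 - x := by linarith [hx.2]
  have e1 : ((x:ℂ)) ^ ((a:ℂ) - 1) = ((x ^ (a-1) : ℝ) : ℂ) := by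
    rw [Complex.ofReal_cpow hx0]; push_cast; ring_nf
  have e2 : ((1 - x:ℂ)) ^ ((b:ℂ) - 1) = (((1-x) ^ (b-1) : ℝ) : ℂ) := by
    rw [Complex.ofReal_cpow hx1]; push_cast; ring_nf
  simp [e1, e2, ← Complex.ofReal_mul]

lemma beta_integral_eq {a b : ℝ} (ha : 0 < a) (hb : 0 < b) :
    ∫ x in (0:ℝ)..1, x ^ (a - 1) * (1 - x) ^ (b - 1)
      = Real.Gamma a * Real.Gamma b / Real.Gamma (a + b) := by
  have ha' : 0 < (a:ℂ).re := by simpa using ha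
  have hb' : 0 < (b:ℂ).re := by simpa using hb
  have key := Complex.Gamma_mul_Gamma_eq_betaIntegral ha' hb'
  have hBeta : Complex.betaIntegral a b
      = ((∫ x in (0:ℝ)..1, x ^ (a-1) * (1-x) ^ (b-1) : ℝ) : ℂ) := by
    rw [Complex.betaIntegral]
    have hcongr : (∫ x in (0:ℝ)..1, (x:ℂ) ^ ((a:ℂ)-1) * (1-(x:ℂ)) ^ ((b:ℂ)-1))
        = ∫ x in (0:ℝ)..1, ((x ^ (a-1) * (1-x) ^ (b-1) : ℝ) : ℂ) := by
      refine intervalIntegral.integral_congr fun x hx => ?_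
      rw [Set.uIcc_of_le zero_le_one] at hx
      have hx0 : (0:ℝ) ≤ x := hx.1
      have hx1 : (0:ℝ) ≤ 1 - x := by linarith [hx.2]
      have e1 : ((x:ℂ)) ^ ((a:ℂ) - 1) = ((x ^ (a-1) : ℝ) : ℂ) := by
        rw [Complex.ofReal_cpow hx0]; push_cast; ring_nf
      have e2 : ((1 - x:ℂ)) ^ ((b:ℂ) - 1) = (((1-x) ^ (b-1) : ℝ) : ℂ) := by
        rw [Complex.ofReal_cpow hx1]; push_cast; ring_nf
      rw [e1]
      rw [show ((1:ℂ) - (x:ℂ)) = ((1 - x : ℝ) : ℂ) by push_cast; ring] at *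
      rw [e2, ← Complex.ofReal_mul]
    rw [hcongr]
    exact RCLike.intervalIntegral_ofReal
  rw [hBeta] at key
  have hGab : Real.Gamma (a + b) ≠ 0 := (Real.Gamma_pos_of_pos (by linarith)).ne'
  have key2 : (Real.Gamma a * Real.Gamma b : ℂ)
      = ((Real.Gamma (a+b) * ∫ x in (0:ℝ)..1, x ^ (a-1) * (1-x) ^ (b-1) : ℝ) : ℂ) := by
    push_cast
    rw [← Complex.Gamma_ofReal, ← Complex.Gamma_ofReal, ← Complex.Gamma_ofReal] at *
    push_cast at key ⊢
    rw [key]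
  have key3 : Real.Gamma a * Real.Gamma b
      = Real.Gamma (a+b) * ∫ x in (0:ℝ)..1, x ^ (a-1) * (1-x) ^ (b-1) := by
    exact_mod_cast key2
  rw [eq_div_iff hGab]
  linarith [key3]


lemma beta_lintegral {a b : ℝ} (ha : 0 < a) (hb : 0 < b) :
    ∫⁻ t in Set.Ioo (0:ℝ) 1, ENNReal.ofReal (t ^ (a-1) * (1-t) ^ (b-1))
      = ENNReal.ofReal (Real.Gamma a * Real.Gamma b / Real.Gamma (a + b)) := by
  rw [← beta_integral_eq ha hb, intervalIntegral.integral_of_le zero_le_one,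
    integral_Ioc_eq_integral_Ioo]
  have hInt : IntegrableOn (fun t : ℝ => t ^ (a-1) * (1-t) ^ (b-1)) (Set.Ioo 0 1) volume :=
    (betaIntegrand_integrableOn ha hb).mono_set Set.Ioo_subset_Ioc_self
  rw [ofReal_integral_eq_lintegral_ofReal hInt
    ((ae_restrict_iff' measurableSet_Ioo).2 (ae_of_all _ fun t ht =>
      mul_nonneg (Real.rpow_nonneg ht.1.le _) (Real.rpow_nonneg (by linarith [ht.2]) _)))]

lemma measurableSet_simplex (n : ℕ) :
    MeasurableSet {y : Fin n → ℝ | (∀ i, 0 ≤ y i) ∧ ∑ i, y i ≤ 1} := by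
  have h : {y : Fin n → ℝ | (∀ i, 0 ≤ y i) ∧ ∑ i, y i ≤ 1}
      = (⋂ i, {y : Fin n → ℝ | 0 ≤ y i}) ∩ {y : Fin n → ℝ | ∑ i, y i ≤ 1} := by
    ext y; simp [Set.mem_iInter]
  rw [h]
  exact (MeasurableSet.iInter fun i =>
      measurableSet_le measurable_const (measurable_pi_apply i)).inter
    (measurableSet_le (Finset.measurable_sum _ fun i _ => measurable_pi_apply i) measurable_const)

lemma measurable_sum_pi (n : ℕ) : Measurable fun y : Fin n → ℝ => ∑ i, y i :=
  Finset.measurable_sum _ fun i _ => measurable_pi_apply i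

set_option maxHeartbeats 1000000 in
theorem key : ∀ (n : ℕ) (β₀ : ℝ) (β : Fin n → ℝ), 0 < β₀ → (∀ i, 0 < β i) →
    (∫⁻ y in {y : Fin n → ℝ | (∀ i, 0 ≤ y i) ∧ (∑ i, y i) ≤ 1},
        ENNReal.ofReal ((1 - ∑ i, y i) ^ (β₀ - 1) * ∏ i, (y i) ^ (β i - 1)))
      = ENNReal.ofReal ((Real.Gamma β₀ * ∏ i, Real.Gamma (β i)) / Real.Gamma (β₀ + ∑ i, β i)) := by
  intro n
  induction n with
  | zero =>
    intro β₀ β hβ₀ _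
    have hset : {y : Fin 0 → ℝ | (∀ i, 0 ≤ y i) ∧ (∑ i, y i) ≤ 1} = Set.univ := by
      ext y; simp
    rw [hset, Measure.restrict_univ]
    simp only [Finset.univ_eq_empty, Finset.sum_empty, Finset.prod_empty, sub_zero, mul_one,
      Real.one_rpow, add_zero]
    rw [lintegral_const]
    have h1 : (volume : Measure (Fin 0 → ℝ)) Set.univ = 1 := by
      simp [MeasureTheory.volume_pi, Measure.pi_univ]
    rw [h1, mul_one, div_self (Real.Gamma_pos_of_pos hβ₀).ne', ENNReal.ofReal_one]
  | succ n ih =>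
    intro β₀ β hβ₀ hβ
    have ha : 0 < β 0 := hβ 0
    set a : ℝ := β 0 with ha_def
    set βs : Fin n → ℝ := fun j => β j.succ with hβs_def
    have hβs : ∀ j, 0 < βs j := fun j => hβ j.succ
    set c : ℝ := β₀ + ∑ j, βs j with hc_def
    have hsum_nonneg : (0:ℝ) ≤ ∑ j, βs j := Finset.sum_nonneg fun j _ => (hβs j).le
    have hc : 0 < c := by rw [hc_def]; linarith
    have hΓc : 0 < Real.Gamma c := Real.Gamma_pos_of_pos hc
    set K : ℝ := (Real.Gamma β₀ * ∏ j, Real.Gamma (βs j)) / Real.Gamma c with hK_def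
    have hK : 0 ≤ K := le_of_lt (div_pos (mul_pos (Real.Gamma_pos_of_pos hβ₀)
      (Finset.prod_pos fun j _ => Real.Gamma_pos_of_pos (hβs j))) hΓc)
    set T : Set (ℝ × (Fin n → ℝ)) :=
      {q | (0 ≤ q.1 ∧ ∀ i, 0 ≤ q.2 i) ∧ q.1 + ∑ i, q.2 i ≤ 1} with hT_def
    have hTmeas : MeasurableSet T := by
      have h : T = (({q : ℝ × (Fin n → ℝ) | 0 ≤ q.1} ∩ ⋂ i, {q : ℝ × (Fin n → ℝ) | 0 ≤ q.2 i}))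
          ∩ {q : ℝ × (Fin n → ℝ) | q.1 + ∑ i, q.2 i ≤ 1} := by
        ext q; simp only [hT_def, Set.mem_setOf_eq, Set.mem_inter_iff, Set.mem_iInter]
      rw [h]
      exact ((measurableSet_le measurable_const measurable_fst).inter
        (MeasurableSet.iInter fun i => measurableSet_le measurable_const
          ((measurable_pi_apply i).comp measurable_snd))).inter
        (measurableSet_le (measurable_fst.add
          ((measurable_sum_pi n).comp measurable_snd)) measurable_const)
    set G : ℝ × (Fin n → ℝ) → ℝ≥0∞ := fun q =>
      T.indicator (fun q => ENNReal.ofReal ((1 - (q.1 + ∑ i, q.2 i)) ^ (β₀ - 1) *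
        (q.1 ^ (a - 1) * ∏ i, (q.2 i) ^ (βs i - 1)))) q with hG_def
    have hGmeas : Measurable G := by
      apply Measurable.indicator _ hTmeas
      apply Measurable.ennreal_ofReal
      exact (((measurable_rpow_const _).comp (measurable_const.sub
        (measurable_fst.add ((measurable_sum_pi n).comp measurable_snd)))).mul
        (((measurable_rpow_const _).comp measurable_fst).mul
        (Finset.measurable_prod _ fun i _ =>
          (measurable_rpow_const _).comp ((measurable_pi_apply i).comp measurable_snd))))
    have step1 : (∫⁻ y in {y : Fin (n+1) → ℝ | (∀ i, 0 ≤ y i) ∧ (∑ i, y i) ≤ 1},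
          ENNReal.ofReal ((1 - ∑ i, y i) ^ (β₀ - 1) * ∏ i, (y i) ^ (β i - 1)))
        = ∫⁻ q, G q ∂(volume : Measure (ℝ × (Fin n → ℝ))) := by
      rw [← lintegral_indicator (measurableSet_simplex (n+1))]
      rw [← (volume_preserving_piFinSuccAbove (fun _ : Fin (n+1) => ℝ) 0).lintegral_comp hGmeas]
      refine lintegral_congr fun y => ?_
      have he : (MeasurableEquiv.piFinSuccAbove (fun _ : Fin (n+1) => ℝ) 0) y
          = (y 0, fun j => y j.succ) := by
        simp only [MeasurableEquiv.piFinSuccAbove_apply, Fin.succAbove_zero]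
        rfl
      rw [he]
      simp only [hG_def]
      by_cases hy : y ∈ {y : Fin (n+1) → ℝ | (∀ i, 0 ≤ y i) ∧ (∑ i, y i) ≤ 1}
      · rw [Set.indicator_of_mem hy, Set.indicator_of_mem]
        · simp only []
          congr 1
          rw [Fin.sum_univ_succ, Fin.prod_univ_succ]
        · refine ⟨⟨hy.1 0, fun i => hy.1 i.succ⟩, ?_⟩
          have := hy.2
          rw [Fin.sum_univ_succ] at this
          exact this
      · rw [Set.indicator_of_notMem hy, Set.indicator_of_notMem]
        intro hmem
        refine hy ⟨fun i => Fin.cases hmem.1.1 (fun j => hmem.1.2 j) i, ?_⟩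
        rw [Fin.sum_univ_succ]
        exact hmem.2
    have step2 : (∫⁻ q, G q ∂(volume : Measure (ℝ × (Fin n → ℝ))))
        = ∫⁻ t : ℝ, ∫⁻ z : Fin n → ℝ, G (t, z) := by
      rw [Measure.volume_eq_prod, lintegral_prod _ hGmeas.aemeasurable]
    have inner_eq : ∀ t ∈ Set.Ioo (0:ℝ) 1,
        (∫⁻ z : Fin n → ℝ, G (t, z))
          = ENNReal.ofReal (t ^ (a-1) * (1-t) ^ (c-1)) * ENNReal.ofReal K := by
      intro t ht
      set r : ℝ := 1 - t with hr_def
      have hr : 0 < r := by rw [hr_def]; linarith [ht.2]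
      set S₂ : Set (Fin n → ℝ) := {z | (∀ i, 0 ≤ z i) ∧ ∑ i, z i ≤ r} with hS₂_def
      set G₂ : (Fin n → ℝ) → ℝ≥0∞ := fun z =>
        S₂.indicator (fun z => ENNReal.ofReal ((r - ∑ i, z i) ^ (β₀ - 1) *
          ∏ i, (z i) ^ (βs i - 1))) z with hG₂_def
      have hS₂meas : MeasurableSet S₂ := by
        have h : S₂ = (⋂ i, {z : Fin n → ℝ | 0 ≤ z i}) ∩ {z : Fin n → ℝ | ∑ i, z i ≤ r} := by
          ext z; simp [hS₂_def, Set.mem_iInter]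
        rw [h]
        exact (MeasurableSet.iInter fun i =>
            measurableSet_le measurable_const (measurable_pi_apply i)).inter
          (measurableSet_le (measurable_sum_pi n) measurable_const)
      have hG₂meas : Measurable G₂ := by
        apply Measurable.indicator _ hS₂meas
        exact Measurable.ennreal_ofReal
          (((measurable_rpow_const _).comp (measurable_const.sub (measurable_sum_pi n))).mul
           (Finset.measurable_prod _ fun i _ =>
             (measurable_rpow_const _).comp (measurable_pi_apply i)))
      have hsplit : ∀ z, G (t, z) = ENNReal.ofReal (t ^ (a-1)) * G₂ z := by
        intro z
        simp only [hG_def, hG₂_def]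
        by_cases hz : z ∈ S₂
        · have hmemT : (t, z) ∈ T := by
            refine ⟨⟨ht.1.le, hz.1⟩, ?_⟩
            have h2 := hz.2
            rw [hr_def] at h2
            simp only [Set.mem_setOf_eq]
            linarith
          rw [Set.indicator_of_mem hmemT, Set.indicator_of_mem hz]
          rw [← ENNReal.ofReal_mul (Real.rpow_nonneg ht.1.le _)]
          congr 1
          have h1 : (1:ℝ) - (t + ∑ i, z i) = r - ∑ i, z i := by rw [hr_def]; ring
          simp only [h1]
          ring
        · have hmemT : (t, z) ∉ T := by
            intro hmem
            refine hz ⟨hmem.1.2, ?_⟩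
            have h2 := hmem.2
            rw [hr_def]
            linarith
          rw [Set.indicator_of_notMem hmemT, Set.indicator_of_notMem hz, mul_zero]
      have hrn : (0:ℝ) < r ^ n := pow_pos hr n
      have hd : Module.finrank ℝ (Fin n → ℝ) = n := by
        simp [Module.finrank_fintype_fun_eq_card]
      have hmapeq : (∫⁻ z, G₂ z) = ENNReal.ofReal (r ^ n) * ∫⁻ w, G₂ (r • w) := by
        have h1 : (∫⁻ w, G₂ (r • w) ∂volume)
            = ∫⁻ z, G₂ z ∂(Measure.map (r • ·) (volume : Measure (Fin n → ℝ))) := by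
          rw [lintegral_map hG₂meas (measurable_const_smul r)]
        rw [Measure.map_addHaar_smul volume hr.ne', lintegral_smul_measure, hd] at h1
        rw [abs_of_pos (inv_pos.mpr hrn)] at h1
        rw [h1, smul_eq_mul, ← mul_assoc, ← ENNReal.ofReal_mul hrn.le,
          mul_inv_cancel₀ hrn.ne', ENNReal.ofReal_one, one_mul]
      set Fstd : (Fin n → ℝ) → ℝ≥0∞ := fun w =>
        ({w : Fin n → ℝ | (∀ i, 0 ≤ w i) ∧ ∑ i, w i ≤ 1}).indicator
          (fun w => ENNReal.ofReal ((1 - ∑ i, w i) ^ (β₀ - 1) *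
            ∏ i, (w i) ^ (βs i - 1))) w with hFstd_def
      have hscale : ∀ w, G₂ (r • w)
          = ENNReal.ofReal (r ^ (β₀ - 1) * r ^ (∑ j, (βs j - 1))) * Fstd w := by
        intro w
        simp only [hG₂_def, hFstd_def]
        by_cases hw : w ∈ {w : Fin n → ℝ | (∀ i, 0 ≤ w i) ∧ ∑ i, w i ≤ 1}
        · have hsum : ∑ i, (r • w) i = r * ∑ i, w i := by
            simp [Finset.mul_sum]
          have hmem : r • w ∈ S₂ := by
            refine ⟨fun i => ?_, ?_⟩
            · simp only [Pi.smul_apply, smul_eq_mul]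
              exact mul_nonneg hr.le (hw.1 i)
            · rw [hsum]
              calc r * ∑ i, w i ≤ r * 1 := mul_le_mul_of_nonneg_left hw.2 hr.le
                _ = r := mul_one r
          rw [Set.indicator_of_mem hmem, Set.indicator_of_mem hw]
          have h2 : r - r * ∑ i, w i = r * (1 - ∑ i, w i) := by ring
          have h3 : (r * (1 - ∑ i, w i)) ^ (β₀ - 1)
              = r ^ (β₀-1) * (1 - ∑ i, w i) ^ (β₀-1) :=
            Real.mul_rpow hr.le (by linarith [hw.2])
          have h4 : ∏ i, ((r • w) i) ^ (βs i - 1)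
              = r ^ (∑ j, (βs j - 1)) * ∏ i, (w i) ^ (βs i - 1) := by
            rw [← prod_rpow_const hr, ← Finset.prod_mul_distrib]
            refine Finset.prod_congr rfl fun i _ => ?_
            simp only [Pi.smul_apply, smul_eq_mul]
            exact Real.mul_rpow hr.le (hw.1 i)
          rw [hsum, h2, h3, h4, ← ENNReal.ofReal_mul (by positivity)]
          congr 1
          ring
        · have hnm : r • w ∉ S₂ := by
            intro hmem
            refine hw ⟨fun i => ?_, ?_⟩
            · have h5 := hmem.1 i
              simp only [Pi.smul_apply, smul_eq_mul] at h5
              nlinarith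
            · have h6 := hmem.2
              have hsum : ∑ i, (r • w) i = r * ∑ i, w i := by
                simp [Finset.mul_sum]
              rw [hsum] at h6
              nlinarith
          rw [Set.indicator_of_notMem hnm, Set.indicator_of_notMem hw, mul_zero]
      have hFstd_int : (∫⁻ w, Fstd w) = ENNReal.ofReal K := by
        simp only [hFstd_def]
        rw [lintegral_indicator (measurableSet_simplex n)]
        rw [ih β₀ βs hβ₀ hβs, hK_def, hc_def]
      have hpow : r ^ n * (r ^ (β₀ - 1) * r ^ (∑ j, (βs j - 1))) = r ^ (c-1) := by
        rw [← Real.rpow_natCast r n, ← Real.rpow_add hr, ← Real.rpow_add hr]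
        congr 1
        rw [Finset.sum_sub_distrib, Finset.sum_const, Finset.card_univ, Fintype.card_fin,
          nsmul_eq_mul, mul_one, hc_def]
        ring
      calc (∫⁻ z : Fin n → ℝ, G (t, z))
          = ∫⁻ z, ENNReal.ofReal (t ^ (a-1)) * G₂ z := lintegral_congr hsplit
        _ = ENNReal.ofReal (t ^ (a-1)) * ∫⁻ z, G₂ z :=
            lintegral_const_mul' _ _ ENNReal.ofReal_ne_top
        _ = ENNReal.ofReal (t ^ (a-1)) * (ENNReal.ofReal (r ^ n) * ∫⁻ w, G₂ (r • w)) := by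
            rw [hmapeq]
        _ = ENNReal.ofReal (t ^ (a-1)) * (ENNReal.ofReal (r ^ n) *
              (ENNReal.ofReal (r ^ (β₀ - 1) * r ^ (∑ j, (βs j - 1))) * ∫⁻ w, Fstd w)) := by
            rw [lintegral_congr hscale, lintegral_const_mul' _ _ ENNReal.ofReal_ne_top]
        _ = ENNReal.ofReal (t ^ (a-1) * (1-t) ^ (c-1)) * ENNReal.ofReal K := by
            have hrp : (0:ℝ) ≤ r ^ (β₀ - 1) * r ^ (∑ j, (βs j - 1)) :=
              mul_nonneg (Real.rpow_nonneg hr.le _) (Real.rpow_nonneg hr.le _)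
            have hfin : (0:ℝ) ≤ t ^ (a-1) * r ^ (c-1) :=
              mul_nonneg (Real.rpow_nonneg ht.1.le _) (Real.rpow_nonneg hr.le _)
            rw [hFstd_int, ← ENNReal.ofReal_mul hrp,
              ← ENNReal.ofReal_mul hrn.le, ← ENNReal.ofReal_mul (Real.rpow_nonneg ht.1.le _),
              ← hr_def, ← ENNReal.ofReal_mul hfin]
            congr 1
            rw [← hpow]
            ring
    have houter : (fun t : ℝ => ∫⁻ z : Fin n → ℝ, G (t, z))
        =ᵐ[volume] (Set.Ioo (0:ℝ) 1).indicator
          (fun t => ENNReal.ofReal (t ^ (a-1) * (1-t) ^ (c-1)) * ENNReal.ofReal K) := by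
      have h0 : ∀ᵐ t : ℝ ∂volume, t ≠ 0 := by
        rw [ae_iff]
        simp only [ne_eq, not_not, Set.setOf_eq_eq_singleton]
        exact measure_singleton 0
      have h1 : ∀ᵐ t : ℝ ∂volume, t ≠ 1 := by
        rw [ae_iff]
        simp only [ne_eq, not_not, Set.setOf_eq_eq_singleton]
        exact measure_singleton 1
      filter_upwards [h0, h1] with t ht0 ht1
      by_cases hmem : t ∈ Set.Ioo (0:ℝ) 1
      · rw [Set.indicator_of_mem hmem]
        exact inner_eq t hmem
      · rw [Set.indicator_of_notMem hmem]
        have hzero : ∀ z : Fin n → ℝ, G (t, z) = 0 := by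
          intro z
          simp only [hG_def]
          apply Set.indicator_of_notMem
          intro hmemT
          rcases hmemT with ⟨⟨ht', hz⟩, hsum⟩
          have hz' : 0 ≤ ∑ i, z i := Finset.sum_nonneg fun i _ => hz i
          refine hmem ⟨lt_of_le_of_ne ht' (Ne.symm ht0), lt_of_le_of_ne (by linarith) ht1⟩
        simp only [hzero, lintegral_zero]
    have hβac : 0 ≤ Real.Gamma a * Real.Gamma c / Real.Gamma (a + c) :=
      le_of_lt (div_pos (mul_pos (Real.Gamma_pos_of_pos ha) hΓc)
        (Real.Gamma_pos_of_pos (by linarith)))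
    rw [step1, step2, lintegral_congr_ae houter, lintegral_indicator measurableSet_Ioo,
      lintegral_mul_const' _ _ ENNReal.ofReal_ne_top, beta_lintegral ha hc,
      ← ENNReal.ofReal_mul hβac]
    congr 1
    have hΓac : Real.Gamma (a + c) = Real.Gamma (β₀ + ∑ i, β i) := by
      congr 1
      rw [Fin.sum_univ_succ, hc_def, ha_def, hβs_def]
      ring
    have hprod : (∏ i, Real.Gamma (β i)) = Real.Gamma a * ∏ j, Real.Gamma (βs j) := by
      rw [Fin.prod_univ_succ, ha_def, hβs_def]
    rw [hK_def, hprod, ← hΓac]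
    field_simp

end DirichletAux

/-- the Dirichlet integral over the standard `n`-simplex:
`∫_Δ (1-∑yᵢ)^{β₀-1} ∏ yᵢ^{βᵢ-1} dy = Γ(β₀)∏Γ(βᵢ)/Γ(β₀+∑βᵢ)`. -/
theorem dirichlet_integral_simplex (n : ℕ) (hn : 1 ≤ n) (β₀ : ℝ) (β : Fin n → ℝ)
    (hβ₀ : 0 < β₀) (hβ : ∀ i, 0 < β i) :
    (∫ y in {y : Fin n → ℝ | (∀ i, 0 ≤ y i) ∧ (∑ i, y i) ≤ 1},
        (1 - ∑ i, y i) ^ (β₀ - 1) * ∏ i, (y i) ^ (β i - 1) ∂(volume)) =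
      (Real.Gamma β₀ * ∏ i, Real.Gamma (β i)) / Real.Gamma (β₀ + ∑ i, β i) := by
  have hS := DirichletAux.measurableSet_simplex n
  have hmeas : AEStronglyMeasurable
      (fun y : Fin n → ℝ => (1 - ∑ i, y i) ^ (β₀ - 1) * ∏ i, (y i) ^ (β i - 1))
      (volume.restrict {y : Fin n → ℝ | (∀ i, 0 ≤ y i) ∧ (∑ i, y i) ≤ 1}) :=
    (((DirichletAux.measurable_rpow_const _).comp
        (measurable_const.sub (DirichletAux.measurable_sum_pi n))).mul
      (Finset.measurable_prod _ fun i _ =>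
        (DirichletAux.measurable_rpow_const _).comp (measurable_pi_apply i))).aestronglyMeasurable
  have hnn : 0 ≤ᵐ[volume.restrict {y : Fin n → ℝ | (∀ i, 0 ≤ y i) ∧ (∑ i, y i) ≤ 1}]
      fun y : Fin n → ℝ => (1 - ∑ i, y i) ^ (β₀ - 1) * ∏ i, (y i) ^ (β i - 1) :=
    (ae_restrict_iff' hS).2 (ae_of_all _ fun y hy =>
      mul_nonneg (Real.rpow_nonneg (by linarith [hy.2]) _)
        (Finset.prod_nonneg fun i _ => Real.rpow_nonneg (hy.1 i) _))
  rw [MeasureTheory.integral_eq_lintegral_of_nonneg_ae hnn hmeas,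
    DirichletAux.key n β₀ β hβ₀ hβ]
  have hsum : (0:ℝ) ≤ ∑ i, β i := Finset.sum_nonneg fun i _ => (hβ i).le
  exact ENNReal.toReal_ofReal (div_nonneg
    (mul_nonneg (Real.Gamma_pos_of_pos hβ₀).le
      (Finset.prod_nonneg fun i _ => (Real.Gamma_pos_of_pos (hβ i)).le))
    (Real.Gamma_pos_of_pos (by linarith)).le)
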